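/- There exists a constant C > 1 such that for every nonempty subset J of the integers {n ∈ ℕ : n ≥ 2} and every real number M with 0 < M ≤ (min J)², there exists an entire function f : ℂ → ℂ satisfying: (i) M_f(r) ≤ C·exp(C·log²(r+1)) for all r > 0; and (ii) f(2^n) = M for every n ∈ J, and f(2^n) = 0 for every integer n ≥ 2 with n ∉ J. The constant C is independent of J and M. -/

import Mathlib

open Filter Finset

namespace Dispatcher

variable {n m N : ℕ} {r : ℝ} {z : ℂ}


noncomputable def uu (n m : ℕ) (z : ℂ) : ℂ :=
  if 2 ≤ m ∧ m ≠ n then ((2:ℂ)^m - z) / ((2:ℂ)^m - (2:ℂ)^n) else 1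

noncomputable def FF (n N : ℕ) (z : ℂ) : ℂ := ∏ m ∈ Finset.range N, uu n m z

noncomputable def ee (n : ℕ) (z : ℂ) : ℂ := limUnder atTop (fun N => FF n N z)

noncomputable def dd (n : ℕ) (r : ℝ) (m : ℕ) : ℝ :=
  if 2 ≤ m ∧ m ≠ n then ((2:ℝ)^n + r) * 2 * (2⁻¹:ℝ)^m else 0

lemma pow_sub_pow_ne {m n : ℕ} (h : m ≠ n) : (2:ℂ)^m - (2:ℂ)^n ≠ 0 := by
  rw [sub_ne_zero]
  intro hc
  apply h
  have : ((2^m : ℕ) : ℂ) = ((2^n : ℕ) : ℂ) := by push_cast; exact hc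
  exact Nat.pow_right_injective le_rfl (Nat.cast_injective this)

lemma norm_pow_sub_pow {m n : ℕ} : ‖(2:ℂ)^m - (2:ℂ)^n‖ = |(2:ℝ)^m - (2:ℝ)^n| := by
  have : (2:ℂ)^m - (2:ℂ)^n = (((2:ℝ)^m - (2:ℝ)^n : ℝ) : ℂ) := by push_cast; ring
  rw [this, Complex.norm_real, Real.norm_eq_abs]

lemma norm_pow_sub_pow_ge {m n : ℕ} (h : m ≠ n) :
    (2:ℝ)^(max m n) / 2 ≤ ‖(2:ℂ)^m - (2:ℂ)^n‖ := by
  rw [norm_pow_sub_pow]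
  rcases h.lt_or_gt with hlt | hlt
  · rw [max_eq_right hlt.le, abs_sub_comm,
      abs_of_nonneg (sub_nonneg.mpr (pow_le_pow_right₀ one_le_two hlt.le))]
    have h2 : (2:ℝ)^(m+1) ≤ 2^n := pow_le_pow_right₀ one_le_two hlt
    rw [pow_succ] at h2
    linarith
  · rw [max_eq_left hlt.le, abs_of_nonneg (sub_nonneg.mpr (pow_le_pow_right₀ one_le_two hlt.le))]
    have h2 : (2:ℝ)^(n+1) ≤ 2^m := pow_le_pow_right₀ one_le_two hlt
    rw [pow_succ] at h2
    linarith

lemma norm_uu_sub_one_le {n m : ℕ} {z : ℂ} {r : ℝ} (hz : ‖z‖ ≤ r) :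
    ‖uu n m z - 1‖ ≤ dd n r m := by
  unfold uu dd
  split_ifs with h
  · obtain ⟨hm2, hmn⟩ := h
    have hne := pow_sub_pow_ne hmn
    have : ((2:ℂ)^m - z) / ((2:ℂ)^m - (2:ℂ)^n) - 1 = ((2:ℂ)^n - z) / ((2:ℂ)^m - (2:ℂ)^n) := by
      field_simp
      ring
    rw [this, norm_div]
    have hnum : ‖(2:ℂ)^n - z‖ ≤ (2:ℝ)^n + r := by
      calc ‖(2:ℂ)^n - z‖ ≤ ‖(2:ℂ)^n‖ + ‖z‖ := norm_sub_le _ _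
      _ ≤ (2:ℝ)^n + r := by
          simp only [norm_pow, Complex.norm_ofNat]
          linarith
    have hden : (2:ℝ)^m / 2 ≤ ‖(2:ℂ)^m - (2:ℂ)^n‖ := by
      refine le_trans ?_ (norm_pow_sub_pow_ge hmn)
      gcongr
      · norm_num
      · exact le_max_left _ _
    have hdenpos : (0:ℝ) < (2:ℝ)^m / 2 := by positivity
    have h1 : ‖(2:ℂ)^n - z‖ / ‖(2:ℂ)^m - (2:ℂ)^n‖ ≤ ((2:ℝ)^n + r) / ((2:ℝ)^m / 2) := by
      have hr0 : (0:ℝ) ≤ (2:ℝ)^n + r := le_trans (norm_nonneg _) hnum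
      exact div_le_div₀ hr0 hnum hdenpos hden
    refine h1.trans (le_of_eq ?_)
    rw [div_div_eq_mul_div, div_eq_mul_inv, mul_assoc, ← inv_pow]
    ring_nf
  · simp

lemma dd_nonneg {n : ℕ} {r : ℝ} (hr : 0 ≤ r) (m : ℕ) : 0 ≤ dd n r m := by
  unfold dd; split_ifs with h
  · positivity
  · exact le_refl 0



-- prod (1+x) bound lemma
lemma norm_prod_sub_one_le {s : Finset ℕ} {g : ℕ → ℂ} :
    ‖∏ i ∈ s, g i - 1‖ ≤ ∏ i ∈ s, (1 + ‖g i - 1‖) - 1 := by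
  classical
  induction s using Finset.induction with
  | empty => simp
  | insert a s hnot ih =>
    rw [Finset.prod_insert hnot, Finset.prod_insert hnot]
    have hP : ‖∏ i ∈ s, g i‖ ≤ ∏ i ∈ s, (1 + ‖g i - 1‖) := by
      have h1 := norm_sub_norm_le (∏ i ∈ s, g i) 1
      simp only [norm_one] at h1
      linarith [ih]
    have hprodpos : (1:ℝ) ≤ ∏ i ∈ s, (1 + ‖g i - 1‖) := by
      calc (1:ℝ) = ∏ _i ∈ s, 1 := by simp
      _ ≤ ∏ i ∈ s, (1 + ‖g i - 1‖) := by
          apply Finset.prod_le_prod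
          · intro i _; norm_num
          · intro i _; linarith [norm_nonneg (g i - 1)]
    calc ‖g a * ∏ i ∈ s, g i - 1‖ 
        = ‖(g a - 1) * ∏ i ∈ s, g i + (∏ i ∈ s, g i - 1)‖ := by ring_nf
      _ ≤ ‖(g a - 1) * ∏ i ∈ s, g i‖ + ‖∏ i ∈ s, g i - 1‖ := norm_add_le _ _
      _ ≤ ‖g a - 1‖ * ∏ i ∈ s, (1 + ‖g i - 1‖) + (∏ i ∈ s, (1 + ‖g i - 1‖) - 1) := by
          rw [norm_mul]
          gcongr
      _ = (1 + ‖g a - 1‖) * ∏ i ∈ s, (1 + ‖g i - 1‖) - 1 := by ring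

lemma prod_one_add_le_exp {s : Finset ℕ} {x : ℕ → ℝ} (hx : ∀ i ∈ s, 0 ≤ x i) :
    ∏ i ∈ s, (1 + x i) ≤ Real.exp (∑ i ∈ s, x i) := by
  rw [Real.exp_sum]
  apply Finset.prod_le_prod
  · intro i hi; linarith [hx i hi]
  · intro i hi; linarith [Real.add_one_le_exp (x i)]

lemma summable_dd (n : ℕ) (hr : 0 ≤ r) : Summable (dd n r) := by
  apply Summable.of_nonneg_of_le (dd_nonneg hr) (fun m => ?_)
    ((summable_geometric_of_lt_one (by norm_num) (by norm_num : (2⁻¹:ℝ) < 1)).mul_left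
      (((2:ℝ)^n + r) * 2))
  unfold dd; split_ifs
  · exact le_rfl
  · positivity

noncomputable def DD (n : ℕ) (r : ℝ) : ℝ := ∑' m, dd n r m

noncomputable def tailD (n : ℕ) (r : ℝ) (N : ℕ) : ℝ := ∑' k, dd n r (N + k)

lemma summable_dd_shift (n N : ℕ) (hr : 0 ≤ r) : Summable (fun k => dd n r (N + k)) := by
  have := (summable_nat_add_iff (f := dd n r) N).2 (summable_dd n hr)
  simpa [add_comm] using this

lemma tailD_nonneg (hr : 0 ≤ r) (N : ℕ) : 0 ≤ tailD n r N :=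
  tsum_nonneg (fun k => dd_nonneg hr _)

lemma tailD_anti (hr : 0 ≤ r) {N N' : ℕ} (h : N ≤ N') : tailD n r N' ≤ tailD n r N := by
  have hg := summable_dd_shift n N hr (r := r)
  have key := Summable.sum_add_tsum_nat_add (f := fun k => dd n r (N + k)) (N' - N) hg
  have h2 : ∑' (i : ℕ), dd n r (N + (i + (N' - N))) = tailD n r N' := by
    apply tsum_congr; intro k; congr 1; omega
  have h3 : 0 ≤ ∑ i ∈ range (N' - N), dd n r (N + i) :=
    Finset.sum_nonneg fun i _ => dd_nonneg hr _
  have key' : (∑ i ∈ range (N' - N), dd n r (N + i)) + ∑' (i : ℕ), dd n r (N + (i + (N' - N)))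
      = ∑' (i : ℕ), dd n r (N + i) := key
  have hN : tailD n r N = ∑' (i : ℕ), dd n r (N + i) := rfl
  linarith [h2, key', h3, hN]

lemma tailD_tendsto (n : ℕ) (hr : 0 ≤ r) : Tendsto (tailD n r) atTop (nhds 0) := by
  have := tendsto_sum_nat_add (f := dd n r)
  apply this.congr
  intro N
  unfold tailD
  exact tsum_congr fun k => by rw [add_comm]


lemma norm_uu_le {n m : ℕ} {z : ℂ} {r : ℝ} (hz : ‖z‖ ≤ r) :
    ‖uu n m z‖ ≤ 1 + dd n r m := by
  have h1 := norm_uu_sub_one_le (n := n) (m := m) hz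
  have h2 : ‖uu n m z‖ ≤ ‖uu n m z - 1‖ + 1 := by
    have := norm_sub_norm_le (uu n m z) 1
    simp only [norm_one] at this
    linarith
  linarith

lemma norm_FF_le (hz : ‖z‖ ≤ r) (hr : 0 ≤ r) (n N : ℕ) :
    ‖FF n N z‖ ≤ Real.exp (DD n r) := by
  calc ‖FF n N z‖ = ∏ m ∈ range N, ‖uu n m z‖ := by rw [FF, norm_prod]
    _ ≤ ∏ m ∈ range N, (1 + dd n r m) := by
        apply Finset.prod_le_prod (fun i _ => norm_nonneg _) (fun i _ => norm_uu_le hz)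
    _ ≤ Real.exp (∑ m ∈ range N, dd n r m) :=
        prod_one_add_le_exp (fun i _ => dd_nonneg hr i)
    _ ≤ Real.exp (DD n r) := by
        apply Real.exp_le_exp.2
        exact Summable.sum_le_tsum _ (fun i _ => dd_nonneg hr i) (summable_dd n hr)

lemma key_est (hz : ‖z‖ ≤ r) (hr : 0 ≤ r) (n : ℕ) {N N' : ℕ} (h : N ≤ N') :
    ‖FF n N' z - FF n N z‖ ≤ Real.exp (DD n r) * (Real.exp (tailD n r N) - 1) := by
  have hsplit : FF n N z * ∏ m ∈ Ico N N', uu n m z = FF n N' z := by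
    rw [FF, FF]; exact Finset.prod_range_mul_prod_Ico _ h
  have h1 : ‖FF n N' z - FF n N z‖ = ‖FF n N z‖ * ‖∏ m ∈ Ico N N', uu n m z - 1‖ := by
    rw [← norm_mul, ← hsplit]; congr 1; ring
  rw [h1]
  have h2 : ‖∏ m ∈ Ico N N', uu n m z - 1‖ ≤ Real.exp (tailD n r N) - 1 := by
    refine norm_prod_sub_one_le.trans ?_
    have h3 : ∏ m ∈ Ico N N', (1 + ‖uu n m z - 1‖) ≤ ∏ m ∈ Ico N N', (1 + dd n r m) := by
      apply Finset.prod_le_prod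
      · intro i _; positivity
      · intro i _; linarith [norm_uu_sub_one_le (n := n) (m := i) hz]
    have h4 : ∏ m ∈ Ico N N', (1 + dd n r m) ≤ Real.exp (∑ m ∈ Ico N N', dd n r m) :=
      prod_one_add_le_exp (fun i _ => dd_nonneg hr i)
    have h5 : ∑ m ∈ Ico N N', dd n r m ≤ tailD n r N := by
      rw [Finset.sum_Ico_eq_sum_range]
      exact Summable.sum_le_tsum _ (fun i _ => dd_nonneg hr _) (summable_dd_shift n N hr)
    have h6 : Real.exp (∑ m ∈ Ico N N', dd n r m) ≤ Real.exp (tailD n r N) :=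
      Real.exp_le_exp.2 h5
    linarith
  have h7 := norm_FF_le hz hr n N
  have h8 : (0:ℝ) ≤ ‖∏ m ∈ Ico N N', uu n m z - 1‖ := norm_nonneg _
  calc ‖FF n N z‖ * ‖∏ m ∈ Ico N N', uu n m z - 1‖
      ≤ Real.exp (DD n r) * ‖∏ m ∈ Ico N N', uu n m z - 1‖ := by
        apply mul_le_mul_of_nonneg_right h7 h8
    _ ≤ Real.exp (DD n r) * (Real.exp (tailD n r N) - 1) := by
        apply mul_le_mul_of_nonneg_left h2 (Real.exp_nonneg _)

lemma cauchy_FF (n : ℕ) (z : ℂ) : CauchySeq (fun N => FF n N z) := by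
  have hr : (0:ℝ) ≤ ‖z‖ := norm_nonneg z
  apply cauchySeq_of_le_tendsto_0
    (fun N => Real.exp (DD n ‖z‖) * (Real.exp (tailD n ‖z‖ N) - 1))
  · intro a b N ha hb
    rcases le_total a b with hab | hab
    · rw [dist_eq_norm']
      refine (key_est le_rfl hr n hab).trans ?_
      have := tailD_anti (n := n) (r := ‖z‖) hr ha
      have h2 := Real.exp_le_exp.2 this
      nlinarith [Real.exp_pos (DD n ‖z‖)]
    · rw [dist_eq_norm]
      refine (key_est le_rfl hr n hab).trans ?_
      have := tailD_anti (n := n) (r := ‖z‖) hr hb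
      have h2 := Real.exp_le_exp.2 this
      nlinarith [Real.exp_pos (DD n ‖z‖)]
  · have h0 := tailD_tendsto n hr (r := ‖z‖)
    have h1 : Tendsto (fun N => Real.exp (tailD n ‖z‖ N) - 1) atTop (nhds 0) := by
      have := (Real.continuous_exp.tendsto 0).comp h0
      simp only [Real.exp_zero] at this
      have h2 := this.sub_const 1
      simpa using h2
    have := h1.const_mul (Real.exp (DD n ‖z‖))
    simpa using this

lemma tendsto_FF (n : ℕ) (z : ℂ) :
    Tendsto (fun N => FF n N z) atTop (nhds (ee n z)) :=
  (cauchy_FF n z).tendsto_limUnder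

lemma ee_eq_one (n : ℕ) : ee n ((2:ℂ)^n) = 1 := by
  have hFF : ∀ N, FF n N ((2:ℂ)^n) = 1 := by
    intro N
    rw [FF]
    apply Finset.prod_eq_one
    intro m _
    rw [uu]
    split_ifs with h
    · exact div_self (pow_sub_pow_ne h.2)
    · rfl
  have : Tendsto (fun N => FF n N ((2:ℂ)^n)) atTop (nhds 1) := by
    simp only [hFF]; exact tendsto_const_nhds
  exact tendsto_nhds_unique (tendsto_FF n _) this

lemma ee_eq_zero {n k : ℕ} (h2 : 2 ≤ k) (hkn : k ≠ n) : ee n ((2:ℂ)^k) = 0 := by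
  have hFF : ∀ N, k < N → FF n N ((2:ℂ)^k) = 0 := by
    intro N hN
    rw [FF]
    apply Finset.prod_eq_zero (Finset.mem_range.2 hN)
    rw [uu, if_pos ⟨h2, hkn⟩, sub_self, zero_div]
  have : Tendsto (fun N => FF n N ((2:ℂ)^k)) atTop (nhds 0) := by
    have heq : (fun _ : ℕ => (0:ℂ)) =ᶠ[atTop] (fun N => FF n N ((2:ℂ)^k)) := by
      filter_upwards [eventually_gt_atTop k] with N hN
      exact (hFF N hN).symm
    exact Tendsto.congr' heq tendsto_const_nhds
  exact tendsto_nhds_unique (tendsto_FF n _) this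

lemma dist_FF_le (hz : ‖z‖ ≤ r) (hr : 0 ≤ r) (n : ℕ) {a b N : ℕ} (ha : N ≤ a) (hb : N ≤ b) :
    dist (FF n a z) (FF n b z) ≤ Real.exp (DD n r) * (Real.exp (tailD n r N) - 1) := by
  rcases le_total a b with hab | hab
  · rw [dist_eq_norm']
    refine (key_est hz hr n hab).trans ?_
    have h2 := Real.exp_le_exp.2 (tailD_anti (n := n) (r := r) hr ha)
    nlinarith [Real.exp_pos (DD n r)]
  · rw [dist_eq_norm]
    refine (key_est hz hr n hab).trans ?_
    have h2 := Real.exp_le_exp.2 (tailD_anti (n := n) (r := r) hr hb)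
    nlinarith [Real.exp_pos (DD n r)]

lemma bound_tendsto_zero (n : ℕ) (hr : 0 ≤ r) :
    Tendsto (fun N => Real.exp (DD n r) * (Real.exp (tailD n r N) - 1)) atTop (nhds 0) := by
  have h0 := tailD_tendsto n hr (r := r)
  have h1 : Tendsto (fun N => Real.exp (tailD n r N) - 1) atTop (nhds 0) := by
    have := (Real.continuous_exp.tendsto 0).comp h0
    simp only [Real.exp_zero] at this
    have h2 := this.sub_const 1
    simpa using h2
  have := h1.const_mul (Real.exp (DD n r))
  simpa using this

lemma uniformCauchy_FF (n : ℕ) {R : ℝ} (hR : 0 ≤ R) :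
    UniformCauchySeqOn (fun N z => FF n N z) atTop (Metric.closedBall 0 R) := by
  rw [Metric.uniformCauchySeqOn_iff]
  intro ε hε
  obtain ⟨N₀, hN₀⟩ := ((bound_tendsto_zero n hR).eventually (gt_mem_nhds hε)).exists
  refine ⟨N₀, fun a ha b hb z hzball => ?_⟩
  have hz : ‖z‖ ≤ R := by
    rw [Metric.mem_closedBall, dist_zero_right] at hzball
    exact hzball
  exact lt_of_le_of_lt (dist_FF_le hz hR n ha hb) hN₀

lemma tendstoUniformlyOn_FF (n : ℕ) {R : ℝ} (hR : 0 ≤ R) :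
    TendstoUniformlyOn (fun N z => FF n N z) (ee n) atTop (Metric.closedBall 0 R) :=
  (uniformCauchy_FF n hR).tendstoUniformlyOn_of_tendsto (fun z _ => tendsto_FF n z)

lemma differentiable_uu (n m : ℕ) : Differentiable ℂ (fun z => uu n m z) := by
  unfold uu
  split_ifs with h
  · exact ((differentiable_const _).sub differentiable_id).div_const _
  · exact differentiable_const _

lemma differentiable_FF (n N : ℕ) : Differentiable ℂ (fun z => FF n N z) := by
  unfold FF
  exact Differentiable.fun_finset_prod (fun i _ => differentiable_uu n i)

lemma differentiable_ee (n : ℕ) : Differentiable ℂ (ee n) := by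
  intro z₀
  have hball : z₀ ∈ Metric.ball (0:ℂ) (‖z₀‖ + 1) := by
    rw [Metric.mem_ball, dist_zero_right]; linarith
  have hR : (0:ℝ) ≤ ‖z₀‖ + 1 := by positivity
  have hdiff : DifferentiableOn ℂ (ee n) (Metric.ball 0 (‖z₀‖ + 1)) := by
    apply TendstoLocallyUniformlyOn.differentiableOn
      (((tendstoUniformlyOn_FF n hR).mono Metric.ball_subset_closedBall).tendstoLocallyUniformlyOn)
    · exact Eventually.of_forall fun N => (differentiable_FF n N).differentiableOn
    · exact Metric.isOpen_ball
  exact hdiff.differentiableAt ((Metric.isOpen_ball).mem_nhds hball)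

noncomputable def cc (r : ℝ) : ℕ := Nat.log 2 ⌈1+r⌉₊ + 1

lemma two_pow_cc {r : ℝ} (hr : 0 < r) : 1 + r ≤ (2:ℝ)^(cc r) := by
  have h1 : (⌈1+r⌉₊ : ℕ) < 2^(cc r) := Nat.lt_pow_succ_log_self (by norm_num) _
  have h2 : (1+r) ≤ (⌈1+r⌉₊ : ℝ) := Nat.le_ceil _
  have h3 : ((⌈1+r⌉₊ : ℕ) : ℝ) < (2:ℝ)^(cc r) := by
    exact_mod_cast Nat.cast_lt.2 h1
  linarith

-- bound for factors with m < n
lemma norm_uu_low {n m : ℕ} {z : ℂ} {r : ℝ} (hz : ‖z‖ ≤ r) (hr : 0 < r)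
    (hm2 : 2 ≤ m) (hmn : m < n) :
    ‖uu n m z‖ ≤ Real.exp (Real.log (1+r) + ((m:ℝ)+1)*Real.log 2 - (n:ℝ)*Real.log 2) := by
  have hne : m ≠ n := hmn.ne
  rw [uu, if_pos ⟨hm2, hne⟩, norm_div]
  have hnum : ‖(2:ℂ)^m - z‖ ≤ (2:ℝ)^m * (1+r) := by
    calc ‖(2:ℂ)^m - z‖ ≤ ‖(2:ℂ)^m‖ + ‖z‖ := norm_sub_le _ _
      _ ≤ (2:ℝ)^m + r := by
          simp only [norm_pow, Complex.norm_ofNat]; linarith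
      _ ≤ (2:ℝ)^m * (1+r) := by
          have h1 : (1:ℝ) ≤ (2:ℝ)^m := one_le_pow₀ one_le_two
          nlinarith
  have hden : (2:ℝ)^n / 2 ≤ ‖(2:ℂ)^m - (2:ℂ)^n‖ := by
    have := norm_pow_sub_pow_ge hne
    rwa [max_eq_right hmn.le] at this
  have hdenpos : (0:ℝ) < (2:ℝ)^n / 2 := by positivity
  have h1 : ‖(2:ℂ)^m - z‖ / ‖(2:ℂ)^m - (2:ℂ)^n‖ ≤ ((2:ℝ)^m * (1+r)) / ((2:ℝ)^n / 2) := by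
    exact div_le_div₀ (by positivity) hnum hdenpos hden
  refine h1.trans (le_of_eq ?_)
  rw [Real.exp_sub, Real.exp_add, Real.exp_log (by linarith : (0:ℝ) < 1+r)]
  have e1 : Real.exp (((m:ℝ)+1)*Real.log 2) = (2:ℝ)^(m+1) := by
    have h : ((m:ℝ)+1) = ((m+1 : ℕ) : ℝ) := by push_cast; ring
    rw [h, Real.exp_nat_mul, Real.exp_log two_pos]
  have e2 : Real.exp ((n:ℝ)*Real.log 2) = (2:ℝ)^n := by
    rw [Real.exp_nat_mul, Real.exp_log two_pos]
  rw [e1, e2, pow_succ]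
  field_simp

-- bound for factors with n ≤ m
lemma norm_uu_high {n m : ℕ} {z : ℂ} {r : ℝ} (hz : ‖z‖ ≤ r) (hr : 0 < r) (hnm : n ≤ m) :
    ‖uu n m z‖ ≤ Real.exp (min (Real.log 2 + Real.log (1+r)) (dd n r m)) := by
  have hL : 0 ≤ Real.log (1+r) := Real.log_nonneg (by linarith)
  have hl2 : 0 ≤ Real.log 2 := Real.log_nonneg one_le_two
  rcases eq_or_lt_of_le hnm with heq | hlt
  · have : uu n m z = 1 := by rw [uu, if_neg]; push_neg; intro _; omega
    rw [this]
    have hdd : dd n r m = 0 := by rw [dd, if_neg]; push_neg; intro _; omega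
    rw [hdd]
    simp only [norm_one]
    rw [min_eq_right (by linarith)]
    simp
  · rcases min_cases (Real.log 2 + Real.log (1+r)) (dd n r m) with ⟨hmin, _⟩ | ⟨hmin, _⟩
    · -- min is log2 + L : use 2(1+r) bound
      rw [hmin]
      have hne : m ≠ n := hlt.ne'
      rcases Nat.lt_or_ge m 2 with hm2 | hm2
      · have : uu n m z = 1 := by rw [uu, if_neg]; push_neg; intro h; omega
        rw [this]; simp only [norm_one]
        rw [Real.exp_add, Real.exp_log (by norm_num : (0:ℝ) < 2),
          Real.exp_log (by linarith : (0:ℝ) < 1+r)]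
        nlinarith
      · rw [uu, if_pos ⟨hm2, hne⟩, norm_div]
        have hnum : ‖(2:ℂ)^m - z‖ ≤ (2:ℝ)^m * (1+r) := by
          calc ‖(2:ℂ)^m - z‖ ≤ ‖(2:ℂ)^m‖ + ‖z‖ := norm_sub_le _ _
            _ ≤ (2:ℝ)^m + r := by
                simp only [norm_pow, Complex.norm_ofNat]; linarith
            _ ≤ (2:ℝ)^m * (1+r) := by
                have h1 : (1:ℝ) ≤ (2:ℝ)^m := one_le_pow₀ one_le_two
                nlinarith
        have hden : (2:ℝ)^m / 2 ≤ ‖(2:ℂ)^m - (2:ℂ)^n‖ := by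
          have := norm_pow_sub_pow_ge hne
          rwa [max_eq_left hlt.le] at this
        have hdenpos : (0:ℝ) < (2:ℝ)^m / 2 := by positivity
        have h1 : ‖(2:ℂ)^m - z‖ / ‖(2:ℂ)^m - (2:ℂ)^n‖ ≤ ((2:ℝ)^m * (1+r)) / ((2:ℝ)^m / 2) := by
          exact div_le_div₀ (by positivity) hnum hdenpos hden
        refine h1.trans ?_
        rw [Real.exp_add, Real.exp_log (by norm_num : (0:ℝ) < 2),
          Real.exp_log (by linarith : (0:ℝ) < 1+r)]
        have hp : (0:ℝ) < (2:ℝ)^m := by positivity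
        rw [div_le_iff₀ (by positivity)]
        field_simp
        nlinarith
    · rw [hmin]
      have h1 := norm_uu_le (n := n) (m := m) hz
      have h2 := Real.add_one_le_exp (dd n r m)
      linarith

lemma gauss_sum (k : ℕ) : ∑ i ∈ range k, (i:ℝ) = (k:ℝ)*((k:ℝ)-1)/2 := by
  induction k with
  | zero => simp
  | succ k ih =>
    rw [Finset.sum_range_succ, ih]
    push_cast
    ring

lemma tailD_le_four {n : ℕ} {r : ℝ} (hr : 0 < r) : tailD n r (n + cc r) ≤ 4 := by
  set K := n + cc r with hK
  have hgeo := summable_geometric_of_lt_one (by norm_num : (0:ℝ) ≤ 2⁻¹) (by norm_num : (2⁻¹:ℝ) < 1)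
  have h1 : tailD n r K ≤ ∑' k : ℕ, ((2:ℝ)^n + r) * 2 * (2⁻¹:ℝ)^K * (2⁻¹:ℝ)^k := by
    apply Summable.tsum_le_tsum _ (summable_dd_shift n _ hr.le) (hgeo.mul_left _)
    intro k
    rw [dd]
    split_ifs
    · rw [pow_add, ← mul_assoc]
    · positivity
  have h2 : ∑' k : ℕ, ((2:ℝ)^n + r) * 2 * (2⁻¹:ℝ)^K * (2⁻¹:ℝ)^k
      = ((2:ℝ)^n + r) * 2 * (2⁻¹:ℝ)^K * 2 := by
    rw [tsum_mul_left, tsum_geometric_of_lt_one (by norm_num) (by norm_num : (2⁻¹:ℝ) < 1)]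
    norm_num
  rw [h2] at h1
  refine h1.trans ?_
  have hpow : (2⁻¹:ℝ)^K = ((2:ℝ)^n * (2:ℝ)^(cc r))⁻¹ := by
    rw [inv_pow, hK, pow_add]
  rw [hpow]
  have hc := two_pow_cc hr
  have hp1 : (0:ℝ) < (2:ℝ)^n := by positivity
  have hp2 : (0:ℝ) < (2:ℝ)^(cc r) := by positivity
  have hp3 : (1:ℝ) ≤ (2:ℝ)^n := one_le_pow₀ one_le_two
  have h5 : (2:ℝ)^n * (1+r) ≤ (2:ℝ)^n * (2:ℝ)^(cc r) := by
    apply mul_le_mul_of_nonneg_left hc hp1.le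
  have hkey : (2:ℝ)^n + r ≤ (2:ℝ)^n * (2:ℝ)^(cc r) := by nlinarith
  calc ((2:ℝ)^n + r) * 2 * ((2:ℝ)^n * (2:ℝ)^(cc r))⁻¹ * 2
      ≤ ((2:ℝ)^n * (2:ℝ)^(cc r)) * 2 * ((2:ℝ)^n * (2:ℝ)^(cc r))⁻¹ * 2 := by
        gcongr
    _ = 4 := by field_simp; ring

noncomputable def EB (n : ℕ) (r : ℝ) : ℝ :=
  ((n:ℝ)-2)*Real.log (1+r) - ((n:ℝ)-2)*(((n:ℝ)-2)-1)/2*Real.log 2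
    + (cc r : ℝ)*(Real.log 2 + Real.log (1+r)) + 4

lemma sum_low (k : ℕ) (r : ℝ) :
    ∑ m ∈ Ico 2 (k+2), (Real.log (1+r) + ((m:ℝ)+1)*Real.log 2 - ((k+2:ℕ):ℝ)*Real.log 2)
      = (k:ℝ)*Real.log (1+r) - (k:ℝ)*((k:ℝ)-1)/2*Real.log 2 := by
  rw [Finset.sum_Ico_eq_sum_range]
  simp only [Nat.add_sub_cancel]
  have h : ∀ i ∈ range k,
      (Real.log (1+r) + (((2+i:ℕ):ℝ)+1)*Real.log 2 - ((k+2:ℕ):ℝ)*Real.log 2)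
      = (Real.log (1+r) + (3 - ((k:ℝ)+2))*Real.log 2) + (i:ℝ)*Real.log 2 := by
    intro i _; push_cast; ring
  rw [Finset.sum_congr rfl h, Finset.sum_add_distrib, Finset.sum_const, card_range,
    ← Finset.sum_mul, gauss_sum, nsmul_eq_mul]
  ring

lemma sum_psi_le {n N : ℕ} {r : ℝ} (hr : 0 < r) :
    ∑ m ∈ Ico n N, min (Real.log 2 + Real.log (1+r)) (dd n r m)
      ≤ (cc r : ℝ)*(Real.log 2 + Real.log (1+r)) + 4 := by
  have hL : 0 ≤ Real.log (1+r) := Real.log_nonneg (by linarith)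
  have hl2 : 0 ≤ Real.log 2 := Real.log_nonneg one_le_two
  have hψnn : ∀ m : ℕ, 0 ≤ min (Real.log 2 + Real.log (1+r)) (dd n r m) :=
    fun m => le_min (by linarith) (dd_nonneg hr.le m)
  set K := n + cc r with hK
  set X := max N K with hX
  calc ∑ m ∈ Ico n N, min (Real.log 2 + Real.log (1+r)) (dd n r m)
      ≤ ∑ m ∈ Ico n X, min (Real.log 2 + Real.log (1+r)) (dd n r m) := by
        apply Finset.sum_le_sum_of_subset_of_nonneg
          (Finset.Ico_subset_Ico le_rfl (le_max_left _ _))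
        intro i _ _; exact hψnn i
    _ = (∑ m ∈ Ico n K, min (Real.log 2 + Real.log (1+r)) (dd n r m))
        + ∑ m ∈ Ico K X, min (Real.log 2 + Real.log (1+r)) (dd n r m) :=
        (Finset.sum_Ico_consecutive _ (Nat.le_add_right n _) (le_max_right _ _)).symm
    _ ≤ (cc r : ℝ)*(Real.log 2 + Real.log (1+r)) + 4 := by
        have hpart1 : ∑ m ∈ Ico n K, min (Real.log 2 + Real.log (1+r)) (dd n r m)
            ≤ (cc r : ℝ)*(Real.log 2 + Real.log (1+r)) := by
          calc ∑ m ∈ Ico n K, min (Real.log 2 + Real.log (1+r)) (dd n r m)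
              ≤ ∑ _m ∈ Ico n K, (Real.log 2 + Real.log (1+r)) :=
                Finset.sum_le_sum (fun i _ => min_le_left _ _)
            _ = (cc r : ℝ)*(Real.log 2 + Real.log (1+r)) := by
                rw [Finset.sum_const, Nat.card_Ico, nsmul_eq_mul, hK, Nat.add_sub_cancel_left]
        have hpart2 : ∑ m ∈ Ico K X, min (Real.log 2 + Real.log (1+r)) (dd n r m) ≤ 4 := by
          calc ∑ m ∈ Ico K X, min (Real.log 2 + Real.log (1+r)) (dd n r m)
              ≤ ∑ m ∈ Ico K X, dd n r m := Finset.sum_le_sum (fun i _ => min_le_right _ _)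
            _ ≤ tailD n r K := by
                rw [Finset.sum_Ico_eq_sum_range]
                exact Summable.sum_le_tsum _ (fun i _ => dd_nonneg hr.le _) (summable_dd_shift n K hr.le)
            _ ≤ 4 := tailD_le_four hr
        linarith

lemma norm_FF_le_EB {n N : ℕ} {z : ℂ} {r : ℝ} (h2 : 2 ≤ n) (hN : n ≤ N)
    (hz : ‖z‖ ≤ r) (hr : 0 < r) :
    ‖FF n N z‖ ≤ Real.exp (EB n r) := by
  have hL : 0 ≤ Real.log (1+r) := Real.log_nonneg (by linarith)
  have hl2 : 0 ≤ Real.log 2 := Real.log_nonneg one_le_two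
  rw [FF, norm_prod, Finset.range_eq_Ico,
    ← Finset.prod_Ico_consecutive (fun m => ‖uu n m z‖) (Nat.zero_le 2) (le_trans h2 hN),
    ← Finset.prod_Ico_consecutive (fun m => ‖uu n m z‖) h2 hN]
  have p1 : ∏ m ∈ Ico 0 2, ‖uu n m z‖ = 1 := by
    apply Finset.prod_eq_one
    intro m hm
    rw [Finset.mem_Ico] at hm
    rw [uu, if_neg (by omega)]
    exact norm_one
  have p2 : ∏ m ∈ Ico 2 n, ‖uu n m z‖
      ≤ Real.exp (((n:ℝ)-2)*Real.log (1+r) - ((n:ℝ)-2)*(((n:ℝ)-2)-1)/2*Real.log 2) := by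
    obtain ⟨k, hk⟩ : ∃ k, n = k + 2 := ⟨n - 2, by omega⟩
    subst hk
    calc ∏ m ∈ Ico 2 (k+2), ‖uu (k+2) m z‖
        ≤ ∏ m ∈ Ico 2 (k+2), Real.exp (Real.log (1+r) + ((m:ℝ)+1)*Real.log 2
            - ((k+2:ℕ):ℝ)*Real.log 2) := by
          apply Finset.prod_le_prod (fun i _ => norm_nonneg _)
          intro m hm
          rw [Finset.mem_Ico] at hm
          exact norm_uu_low hz hr hm.1 hm.2
      _ = Real.exp (∑ m ∈ Ico 2 (k+2), (Real.log (1+r) + ((m:ℝ)+1)*Real.log 2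
            - ((k+2:ℕ):ℝ)*Real.log 2)) := (Real.exp_sum _ _).symm
      _ = Real.exp ((k:ℝ)*Real.log (1+r) - (k:ℝ)*((k:ℝ)-1)/2*Real.log 2) := by
          rw [sum_low]
      _ = Real.exp ((((k+2:ℕ):ℝ)-2)*Real.log (1+r)
            - (((k+2:ℕ):ℝ)-2)*((((k+2:ℕ):ℝ)-2)-1)/2*Real.log 2) := by
          congr 1 <;> push_cast <;> ring
  have p3 : ∏ m ∈ Ico n N, ‖uu n m z‖
      ≤ Real.exp ((cc r : ℝ)*(Real.log 2 + Real.log (1+r)) + 4) := by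
    calc ∏ m ∈ Ico n N, ‖uu n m z‖
        ≤ ∏ m ∈ Ico n N, Real.exp (min (Real.log 2 + Real.log (1+r)) (dd n r m)) := by
          apply Finset.prod_le_prod (fun i _ => norm_nonneg _)
          intro m hm
          rw [Finset.mem_Ico] at hm
          exact norm_uu_high hz hr hm.1
      _ = Real.exp (∑ m ∈ Ico n N, min (Real.log 2 + Real.log (1+r)) (dd n r m)) :=
          (Real.exp_sum _ _).symm
      _ ≤ Real.exp ((cc r : ℝ)*(Real.log 2 + Real.log (1+r)) + 4) :=
          Real.exp_le_exp.2 (sum_psi_le hr)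
  rw [p1, one_mul, EB]
  calc (∏ m ∈ Ico 2 n, ‖uu n m z‖) * ∏ m ∈ Ico n N, ‖uu n m z‖
      ≤ Real.exp (((n:ℝ)-2)*Real.log (1+r) - ((n:ℝ)-2)*(((n:ℝ)-2)-1)/2*Real.log 2)
        * Real.exp ((cc r : ℝ)*(Real.log 2 + Real.log (1+r)) + 4) := by
        apply mul_le_mul p2 p3 (Finset.prod_nonneg (fun i _ => norm_nonneg _))
          (Real.exp_nonneg _)
    _ = _ := by rw [← Real.exp_add]; congr 1; ring

lemma norm_ee_le {n : ℕ} {z : ℂ} {r : ℝ} (h2 : 2 ≤ n) (hz : ‖z‖ ≤ r) (hr : 0 < r) :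
    ‖ee n z‖ ≤ Real.exp (EB n r) := by
  apply le_of_tendsto (tendsto_FF n z).norm
  filter_upwards [eventually_ge_atTop n] with N hN
  exact norm_FF_le_EB h2 hN hz hr

noncomputable def qq : ℝ := Real.exp (-(Real.log 2/4))

noncomputable def BB (r : ℝ) : ℝ :=
  2 * Real.exp ((cc r : ℝ)*(Real.log 2 + Real.log (1+r)) + 8 + 2*(Real.log (1+r) + 4)^2)

lemma qq_pos : 0 < qq := Real.exp_pos _

lemma qq_lt_one : qq < 1 := by
  rw [qq, Real.exp_lt_one_iff]
  have := Real.log_pos (by norm_num : (1:ℝ) < 2)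
  linarith

lemma BB_pos (r : ℝ) : 0 < BB r := by
  rw [BB]; positivity

lemma master {r : ℝ} (hr : 0 < r) {n : ℕ} (h2 : 2 ≤ n) :
    (n:ℝ)^2 * Real.exp (EB n r) ≤ BB r * qq^n := by
  set L := Real.log (1+r) with hL
  set l2 := Real.log 2 with hl2
  have hLpos : 0 ≤ L := Real.log_nonneg (by linarith)
  have hl2a : 0.6931471803 < l2 := Real.log_two_gt_d9
  have hl2b : l2 < 0.6931471808 := Real.log_two_lt_d9
  have hn1 : (n:ℝ) ≤ Real.exp n := by
    have := Real.add_one_le_exp (n:ℝ)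
    linarith
  have hn0 : (0:ℝ) ≤ (n:ℝ) := Nat.cast_nonneg n
  have h1 : (n:ℝ)^2 ≤ Real.exp ((n:ℝ) + (n:ℝ)) := by
    rw [Real.exp_add]
    nlinarith [Real.exp_pos (n:ℝ)]
  have hq : qq^n = Real.exp ((n:ℝ) * (-(l2/4))) := by
    rw [Real.exp_nat_mul, qq, hl2]
  set κ : ℝ := (n:ℝ) - 2 with hκ
  have hκ0 : 0 ≤ κ := by
    rw [hκ]
    have : (2:ℝ) ≤ (n:ℝ) := by exact_mod_cast h2
    linarith
  calc (n:ℝ)^2 * Real.exp (EB n r)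
      ≤ Real.exp ((n:ℝ) + (n:ℝ)) * Real.exp (EB n r) := by
        apply mul_le_mul_of_nonneg_right h1 (Real.exp_nonneg _)
    _ = Real.exp ((n:ℝ) + (n:ℝ) + EB n r) := by rw [← Real.exp_add]
    _ ≤ Real.exp (((cc r : ℝ)*(l2 + L) + 8 + 2*(L + 4)^2) + (n:ℝ) * (-(l2/4))) := by
        apply Real.exp_le_exp.2
        rw [EB, ← hL, ← hl2, ← hκ]
        have hB : κ*(L + 2 + 0.75*l2) - (l2/2)*κ^2 ≤ (L + 2 + 0.75*l2)^2 := by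
          nlinarith [sq_nonneg (l2*κ - (L + 2 + 0.75*l2)), sq_nonneg (L + 2 + 0.75*l2),
            sq_nonneg κ, mul_nonneg hκ0 hLpos]
        have hnκ : (n:ℝ) = κ + 2 := by rw [hκ]; ring
        rw [hnκ]
        nlinarith [sq_nonneg (L + 4), sq_nonneg L, mul_nonneg hκ0 hLpos]
    _ = Real.exp ((cc r : ℝ)*(l2 + L) + 8 + 2*(L + 4)^2) * Real.exp ((n:ℝ) * (-(l2/4))) :=
        Real.exp_add _ _
    _ ≤ BB r * qq^n := by
        rw [BB, hq, ← hL, ← hl2]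
        nlinarith [mul_pos (Real.exp_pos ((cc r : ℝ)*(l2 + L) + 8 + 2*(L + 4)^2))
          (Real.exp_pos ((n:ℝ) * (-(l2/4))))]

open scoped Classical in
noncomputable def ccoef (J : Set ℕ) (M : ℝ) (n : ℕ) : ℂ := if n ∈ J then (M:ℂ) else 0

noncomputable def ff (J : Set ℕ) (M : ℝ) (z : ℂ) : ℂ := ∑' n, ccoef J M n * ee n z

lemma term_bound {J : Set ℕ} {M : ℝ} (hJ2 : ∀ n ∈ J, 2 ≤ n) (hM0 : 0 < M)
    (hM : M ≤ ((sInf J : ℕ) : ℝ)^2) {z : ℂ} {r : ℝ} (hz : ‖z‖ ≤ r) (hr : 0 < r) (n : ℕ) :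
    ‖ccoef J M n * ee n z‖ ≤ BB r * qq^n := by
  rw [ccoef]
  split_ifs with hn
  · have h2 : 2 ≤ n := hJ2 n hn
    have hsinf : sInf J ≤ n := Nat.sInf_le hn
    have hMn : M ≤ (n:ℝ)^2 := by
      refine hM.trans ?_
      have : ((sInf J : ℕ):ℝ) ≤ (n:ℝ) := by exact_mod_cast hsinf
      have h0 : (0:ℝ) ≤ ((sInf J : ℕ):ℝ) := Nat.cast_nonneg _
      nlinarith
    rw [norm_mul, Complex.norm_real, Real.norm_eq_abs, abs_of_pos hM0]
    calc M * ‖ee n z‖ ≤ (n:ℝ)^2 * Real.exp (EB n r) := by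
          apply mul_le_mul hMn (norm_ee_le h2 hz hr) (norm_nonneg _) (by positivity)
      _ ≤ BB r * qq^n := master hr h2
  · simp only [zero_mul, norm_zero]
    exact mul_nonneg (BB_pos r).le (pow_nonneg qq_pos.le n)

lemma summable_majorant (r : ℝ) : Summable (fun n => BB r * qq^n) :=
  (summable_geometric_of_lt_one qq_pos.le qq_lt_one).mul_left _

lemma summable_term {J : Set ℕ} {M : ℝ} (hJ2 : ∀ n ∈ J, 2 ≤ n) (hM0 : 0 < M)
    (hM : M ≤ ((sInf J : ℕ) : ℝ)^2) (z : ℂ) :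
    Summable (fun n => ccoef J M n * ee n z) := by
  apply Summable.of_norm_bounded (summable_majorant (‖z‖+1))
  intro n
  exact term_bound hJ2 hM0 hM (by linarith [norm_nonneg z]) (by positivity) n

lemma differentiable_ff {J : Set ℕ} {M : ℝ} (hJ2 : ∀ n ∈ J, 2 ≤ n) (hM0 : 0 < M)
    (hM : M ≤ ((sInf J : ℕ) : ℝ)^2) : Differentiable ℂ (ff J M) := by
  intro z₀
  set R : ℝ := ‖z₀‖ + 1 with hR
  have hRpos : (0:ℝ) < R := by positivity
  have hunif : TendstoUniformlyOn (fun (s : Finset ℕ) z => ∑ n ∈ s, ccoef J M n * ee n z)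
      (ff J M) atTop (Metric.closedBall 0 R) := by
    apply tendstoUniformlyOn_tsum (summable_majorant R)
    intro n z hzball
    have hz : ‖z‖ ≤ R := by
      rw [Metric.mem_closedBall, dist_zero_right] at hzball
      exact hzball
    exact term_bound hJ2 hM0 hM hz hRpos n
  have hdiff : DifferentiableOn ℂ (ff J M) (Metric.ball 0 R) := by
    apply TendstoLocallyUniformlyOn.differentiableOn
      ((hunif.mono Metric.ball_subset_closedBall).tendstoLocallyUniformlyOn)
    · apply Eventually.of_forall
      intro s
      apply DifferentiableOn.fun_sum
      intro i _
      exact (((differentiable_ee i).const_mul _)).differentiableOn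
    · exact Metric.isOpen_ball
  have hball : z₀ ∈ Metric.ball (0:ℂ) R := by
    rw [Metric.mem_ball, dist_zero_right, hR]; linarith
  exact hdiff.differentiableAt ((Metric.isOpen_ball).mem_nhds hball)

lemma ff_value {J : Set ℕ} {M : ℝ} (hJ2 : ∀ n ∈ J, 2 ≤ n) {k : ℕ} (h2k : 2 ≤ k) :
    ff J M ((2:ℂ)^k) = ccoef J M k := by
  rw [ff]
  rw [tsum_eq_single k]
  · rw [ee_eq_one, mul_one]
  · intro n hnk
    rw [ccoef]
    split_ifs with hn
    · rw [ee_eq_zero h2k (fun h => hnk h.symm), mul_zero]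
    · rw [zero_mul]

lemma cc_log_le {r : ℝ} (hr : 0 < r) :
    (cc r : ℝ) * Real.log 2 ≤ 2*Real.log 2 + Real.log (1+r) := by
  have hceil : (0:ℕ) < ⌈1+r⌉₊ := Nat.ceil_pos.2 (by linarith)
  have h1 : (2:ℕ)^(Nat.log 2 ⌈1+r⌉₊) ≤ ⌈1+r⌉₊ := Nat.pow_log_le_self 2 hceil.ne'
  have h2 : ((⌈1+r⌉₊ : ℕ) : ℝ) < (1+r) + 1 := Nat.ceil_lt_add_one (by linarith)
  have h3 : (2:ℝ)^(Nat.log 2 ⌈1+r⌉₊) ≤ 2*(1+r) := by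
    have : ((2:ℕ)^(Nat.log 2 ⌈1+r⌉₊) : ℝ) ≤ ((⌈1+r⌉₊ : ℕ) : ℝ) := by exact_mod_cast h1
    push_cast at this
    linarith
  have h4 : Real.log ((2:ℝ)^(Nat.log 2 ⌈1+r⌉₊)) ≤ Real.log (2*(1+r)) := by
    apply Real.log_le_log (by positivity) h3
  rw [Real.log_pow, Real.log_mul (by norm_num) (by linarith)] at h4
  rw [cc]
  push_cast
  linarith

lemma ff_norm_bound {J : Set ℕ} {M : ℝ} (hJ2 : ∀ n ∈ J, 2 ≤ n) (hM0 : 0 < M)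
    (hM : M ≤ ((sInf J : ℕ) : ℝ)^2) {z : ℂ} {r : ℝ} (hz : ‖z‖ ≤ r) (hr : 0 < r) :
    ‖ff J M z‖ ≤ Real.exp 60 * Real.exp (Real.exp 60 * Real.log (r+1)^2) := by
  have hsumnorm : Summable (fun n => ‖ccoef J M n * ee n z‖) := by
    apply Summable.of_nonneg_of_le (fun n => norm_nonneg _)
      (term_bound hJ2 hM0 hM hz hr) (summable_majorant r)
  have h1 : ‖ff J M z‖ ≤ ∑' n, ‖ccoef J M n * ee n z‖ := norm_tsum_le_tsum_norm hsumnorm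
  have h2 : ∑' n, ‖ccoef J M n * ee n z‖ ≤ ∑' n, BB r * qq^n :=
    Summable.tsum_le_tsum (term_bound hJ2 hM0 hM hz hr) hsumnorm (summable_majorant r)
  have h3 : ∑' n, BB r * qq^n = BB r * (1-qq)⁻¹ := by
    rw [tsum_mul_left, tsum_geometric_of_lt_one qq_pos.le qq_lt_one]
  set L := Real.log (1+r) with hLdef
  have hLr : Real.log (r+1) = L := by rw [hLdef, add_comm]
  have hLpos : 0 ≤ L := Real.log_nonneg (by linarith)
  have hl2a : 0.6931471803 < Real.log 2 := Real.log_two_gt_d9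
  have hl2b : Real.log 2 < 0.6931471808 := Real.log_two_lt_d9
  -- (1-qq)⁻¹ ≤ 8
  have hqq : qq ≤ 1/(1 + Real.log 2/4) := by
    rw [qq]
    rw [Real.exp_neg]
    rw [one_div]
    apply inv_anti₀ (by linarith)
    exact Real.add_one_le_exp _ |>.trans_eq' (by ring)
  have hq8 : (1-qq)⁻¹ ≤ 8 := by
    have hq1 : qq ≤ 1/(1.17) := by
      refine hqq.trans ?_
      apply one_div_le_one_div_of_le (by norm_num)
      linarith
    have h0 : 0 < 1 - qq := by linarith [qq_lt_one]
    rw [inv_le_comm₀ h0 (by norm_num)]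
    norm_num
    linarith
  -- exponent bound
  have hccL : (cc r : ℝ)*(Real.log 2 + L) ≤ 2 + 3.4*L + 2*L^2 := by
    have hcc := cc_log_le hr
    rw [← hLdef] at hcc
    have hccle : (cc r : ℝ) ≤ 2 + 2*L := by
      have hinv : (0:ℝ) < Real.log 2 := by linarith
      nlinarith
    have hccpos : (0:ℝ) ≤ (cc r : ℝ) := Nat.cast_nonneg _
    nlinarith
  have hBB : BB r ≤ 2 * Real.exp (52 + 14*L^2) := by
    rw [BB, ← hLdef]
    have : (cc r : ℝ)*(Real.log 2 + L) + 8 + 2*(L + 4)^2 ≤ 52 + 14*L^2 := by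
      nlinarith [sq_nonneg (L - 1), sq_nonneg L]
    have h2exp := Real.exp_le_exp.2 this
    linarith
  calc ‖ff J M z‖ ≤ BB r * (1-qq)⁻¹ := by rw [← h3]; exact h1.trans h2
    _ ≤ (2 * Real.exp (52 + 14*L^2)) * 8 := by
        apply mul_le_mul hBB hq8 (inv_nonneg.2 (by linarith [qq_lt_one])) (by positivity)
    _ ≤ Real.exp 60 * Real.exp (Real.exp 60 * Real.log (r+1)^2) := by
        rw [hLr]
        rw [Real.exp_add]
        have e1 : (16:ℝ) * Real.exp 52 ≤ Real.exp 60 := by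
          have h16 : (16:ℝ) ≤ Real.exp 8 := by
            have h3 : (3:ℝ) ≤ Real.exp 2 := by linarith [Real.add_one_le_exp (2:ℝ)]
            have h4 : Real.exp ((4:ℕ) * (2:ℝ)) = Real.exp 2 ^ (4:ℕ) := Real.exp_nat_mul 2 4
            have h5 : Real.exp (8:ℝ) = Real.exp 2 ^ (4:ℕ) := by
              rw [← h4]; norm_num
            rw [h5]
            have h6 : (3:ℝ)^(4:ℕ) ≤ Real.exp 2 ^ (4:ℕ) :=
              pow_le_pow_left₀ (by norm_num) h3 4
            norm_num at h6
            linarith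
          calc (16:ℝ) * Real.exp 52 ≤ Real.exp 8 * Real.exp 52 := by
                apply mul_le_mul_of_nonneg_right h16 (Real.exp_nonneg _)
            _ = Real.exp 60 := by rw [← Real.exp_add]; norm_num
        have e2 : Real.exp (14*L^2) ≤ Real.exp (Real.exp 60 * L^2) := by
          apply Real.exp_le_exp.2
          have h60 : (14:ℝ) ≤ Real.exp 60 := by
            have := Real.add_one_le_exp (60:ℝ)
            linarith
          nlinarith [sq_nonneg L]
        calc 2 * (Real.exp 52 * Real.exp (14*L^2)) * 8
            = (16 * Real.exp 52) * Real.exp (14*L^2) := by ring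
          _ ≤ Real.exp 60 * Real.exp (Real.exp 60 * L^2) := by
              apply mul_le_mul e1 e2 (by positivity) (by positivity)

end Dispatcher

/-- **The dispatcher lemma.**  There is a constant `C > 1`, independent of `J` and `M`, such
that for every nonempty set `J` of integers `≥ 2` and every real `M` with `0 < M ≤ (min J)²`,
there is an entire function `f : ℂ → ℂ` with maximum modulus `M_f(r) ≤ C · exp(C · log²(r+1))`
for all `r > 0`, satisfying `f(2^n) = M` for `n ∈ J` and `f(2^n) = 0` for integers `n ≥ 2`
outside `J`. -/
theorem dispatcher_lemma :
    ∃ C : ℝ, 1 < C ∧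
      ∀ J : Set ℕ, J.Nonempty → (∀ n ∈ J, 2 ≤ n) →
        ∀ M : ℝ, 0 < M → M ≤ ((sInf J : ℕ) : ℝ) ^ 2 →
          ∃ f : ℂ → ℂ, Differentiable ℂ f ∧
            (∀ r : ℝ, 0 < r → ∀ z : ℂ, ‖z‖ ≤ r →
              ‖f z‖ ≤ C * Real.exp (C * Real.log (r + 1) ^ 2)) ∧
            (∀ n ∈ J, f (2 ^ n) = (M : ℂ)) ∧
            (∀ n : ℕ, 2 ≤ n → n ∉ J → f (2 ^ n) = 0) := by
  classical
  refine ⟨Real.exp 60, ?_, ?_⟩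
  · have := Real.add_one_le_exp (60:ℝ)
    linarith
  intro J hJne hJ2 M hM0 hM
  refine ⟨Dispatcher.ff J M, Dispatcher.differentiable_ff hJ2 hM0 hM, ?_, ?_, ?_⟩
  · intro r hr z hz
    exact Dispatcher.ff_norm_bound hJ2 hM0 hM hz hr
  · intro n hn
    rw [Dispatcher.ff_value hJ2 (hJ2 n hn), Dispatcher.ccoef, if_pos hn]
  · intro n h2n hn
    rw [Dispatcher.ff_value hJ2 h2n, Dispatcher.ccoef, if_neg hn]
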